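/- Let Cay(G,S) be a finite Cayley graph. Then for all i, j ∈ I(G), Σ_{k ∈ I(G)} p_{i,k}^j · |S_k(e)| = |S_j(e)|. Equivalently, the vector π_G = (|S_k(e)|/|G|)_{k ∈ I(G)} is a stationary distribution of every transition matrix P_i = (p_{i,k}^j)_{k,j ∈ I(G)}. -/

import Mathlib

open scoped BigOperators

noncomputable section

/-- The Cayley graph of a group `G` with connection set `S`. -/
def cayley {G : Type*} [Group G] (S : Set G) : SimpleGraph G :=
  SimpleGraph.fromRel (fun v w => v⁻¹ * w ∈ S)

/-- The sphere of radius `n` around `v` in the graph `Γ`. -/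
def gsphere {V : Type*} (Γ : SimpleGraph V) (v : V) (n : ℕ) : Set V :=
  {w | Γ.dist v w = n}

/-- `I(Γ, v₀)`: the set of distances realized from the base point `v₀`. -/
def idx {V : Type*} (Γ : SimpleGraph V) (v0 : V) : Set ℕ :=
  {n | (gsphere Γ v0 n).Nonempty}

/-- The structure constants `p_{i,j}^k` of the (pre-)hypergroup derived from `(Γ, v₀)`. -/
noncomputable def structConst {V : Type*} (Γ : SimpleGraph V) (v0 : V) (i j k : ℕ) : ℚ :=
  (1 / ((gsphere Γ v0 i).ncard : ℚ)) *
    ∑ᶠ v ∈ gsphere Γ v0 i,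
      ((gsphere Γ v j ∩ gsphere Γ v0 k).ncard : ℚ) / ((gsphere Γ v j).ncard : ℚ)

section Aux

variable {G : Type*} [Group G] (S : Set G)

/-- Left multiplication is an automorphism of the Cayley graph. -/
def cayleyMulIso (g : G) : cayley S ≃g cayley S where
  toEquiv := Equiv.mulLeft g
  map_rel_iff' := by
    intro v w
    simp only [cayley, SimpleGraph.fromRel_adj, Equiv.coe_mulLeft, mul_inv_rev,
      mul_left_cancel_iff, ne_eq]
    constructor
    · rintro ⟨h1, h2⟩
      refine ⟨h1, ?_⟩
      rcases h2 with h | h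
      · left; rw [← mul_assoc, mul_assoc v⁻¹ g⁻¹ g, inv_mul_cancel, mul_one] at h; exact h
      · right; rw [← mul_assoc, mul_assoc w⁻¹ g⁻¹ g, inv_mul_cancel, mul_one] at h; exact h
    · rintro ⟨h1, h2⟩
      refine ⟨h1, ?_⟩
      rcases h2 with h | h
      · left; rw [← mul_assoc, mul_assoc v⁻¹ g⁻¹ g, inv_mul_cancel, mul_one]; exact h
      · right; rw [← mul_assoc, mul_assoc w⁻¹ g⁻¹ g, inv_mul_cancel, mul_one]; exact h

lemma cayley_dist_mul_le (g v w : G) :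
    (cayley S).dist (g * v) (g * w) ≤ (cayley S).dist v w := by
  by_cases h : (cayley S).Reachable v w
  · obtain ⟨p, hp⟩ := h.exists_walk_length_eq_dist
    calc (cayley S).dist (g * v) (g * w)
        ≤ (p.map (cayleyMulIso S g).toHom).length := SimpleGraph.dist_le _
      _ = (cayley S).dist v w := by rw [SimpleGraph.Walk.length_map, hp]
  · have h2 : ¬ (cayley S).Reachable (g * v) (g * w) := by
      intro hr
      exact h (by simpa [cayleyMulIso] using hr.map (cayleyMulIso S g⁻¹).toHom)
    rw [SimpleGraph.dist_eq_zero_of_not_reachable h,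
      SimpleGraph.dist_eq_zero_of_not_reachable h2]

lemma cayley_dist_mul (g v w : G) :
    (cayley S).dist (g * v) (g * w) = (cayley S).dist v w := by
  refine le_antisymm (cayley_dist_mul_le S g v w) ?_
  have := cayley_dist_mul_le S g⁻¹ (g * v) (g * w)
  simpa [← mul_assoc] using this

lemma cayley_dist_eq (v w : G) :
    (cayley S).dist v w = (cayley S).dist 1 (v⁻¹ * w) := by
  have := cayley_dist_mul S v⁻¹ v w
  simpa using this.symm

lemma gsphere_eq_image (v : G) (k : ℕ) :
    gsphere (cayley S) v k = (fun x => v * x) '' gsphere (cayley S) 1 k := by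
  ext w
  simp only [gsphere, Set.mem_setOf_eq, Set.mem_image]
  constructor
  · intro h
    exact ⟨v⁻¹ * w, by rw [← cayley_dist_eq]; exact h, by group⟩
  · rintro ⟨x, hx, rfl⟩
    rw [cayley_dist_eq]
    simpa using hx

end Aux

theorem cayley_stationary_distribution {G : Type*} [Group G] [Fintype G] (S : Set G)
    (hsym : ∀ s ∈ S, s⁻¹ ∈ S) (hid : (1 : G) ∉ S)
    (hgen : Subgroup.closure S = ⊤) :
    ∀ i ∈ idx (cayley S) (1 : G), ∀ j ∈ idx (cayley S) (1 : G),
      (∑ᶠ k ∈ idx (cayley S) (1 : G),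
          structConst (cayley S) (1 : G) i k j * ((gsphere (cayley S) (1 : G) k).ncard : ℚ))
        = ((gsphere (cayley S) (1 : G) j).ncard : ℚ) ∧
      (∑ᶠ k ∈ idx (cayley S) (1 : G),
          ((gsphere (cayley S) (1 : G) k).ncard : ℚ) / (Fintype.card G : ℚ)
            * structConst (cayley S) (1 : G) i k j)
        = ((gsphere (cayley S) (1 : G) j).ncard : ℚ) / (Fintype.card G : ℚ) := by
  classical
  intro i hi j hj
  set Γ := cayley S with hΓ
  -- finsets for spheres
  set Sfin : G → ℕ → Finset G := fun v k => Finset.univ.filter (fun w => Γ.dist v w = k) with hSfin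
  have hset : ∀ v k, gsphere Γ v k = ↑(Sfin v k) := by
    intro v k
    ext w
    simp [gsphere, hSfin]
  -- idx is finite
  have hidx_range : idx Γ (1 : G) = Set.range (Γ.dist 1) := by
    ext n
    simp [idx, gsphere, Set.Nonempty, eq_comm]
  have hfin : (idx Γ (1 : G)).Finite := by
    rw [hidx_range]; exact Set.finite_range _
  set IF : Finset ℕ := hfin.toFinset with hIF
  have hidx_coe : idx Γ (1 : G) = ↑IF := (Set.Finite.coe_toFinset hfin).symm
  -- sphere sizes
  set c : ℕ → ℕ := fun k => (gsphere Γ 1 k).ncard with hc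
  have hsize : ∀ (v : G) (k : ℕ), (gsphere Γ v k).ncard = c k := by
    intro v k
    rw [gsphere_eq_image S v k, Set.ncard_image_of_injective _ (mul_right_injective v)]
  have hpos : ∀ k, k ∈ IF → 0 < c k := by
    intro k hk
    rw [hIF, Set.Finite.mem_toFinset] at hk
    exact (Set.ncard_pos (Set.toFinite _)).mpr hk
  have hcard : ∀ v k, (gsphere Γ v k).ncard = (Sfin v k).card := by
    intro v k; rw [hset]; exact Set.ncard_coe_finset _
  -- partition counting lemma
  have hpart : ∀ v : G,
      ∑ k ∈ IF, ((gsphere Γ v k ∩ gsphere Γ 1 j).ncard) = (gsphere Γ 1 j).ncard := by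
    intro v
    have hmem : ∀ w ∈ Sfin 1 j, Γ.dist v w ∈ IF := by
      intro w _
      rw [hIF, Set.Finite.mem_toFinset]
      exact ⟨v⁻¹ * w, (cayley_dist_eq S v w).symm⟩
    have key := Finset.card_eq_sum_card_fiberwise hmem
    have hinter : ∀ k, (gsphere Γ v k ∩ gsphere Γ 1 j).ncard
        = ((Sfin 1 j).filter (fun w => Γ.dist v w = k)).card := by
      intro k
      have : gsphere Γ v k ∩ gsphere Γ 1 j
          = ↑((Sfin 1 j).filter (fun w => Γ.dist v w = k)) := by
        ext w
        simp only [hset, Finset.coe_filter, Set.mem_inter_iff, Set.mem_setOf_eq,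
          Finset.mem_coe, Finset.mem_filter, hSfin, Finset.mem_univ, true_and]
        tauto
      rw [this, Set.ncard_coe_finset]
    rw [hcard 1 j, key]
    exact Finset.sum_congr rfl (fun k _ => hinter k)
  -- convert finsums over idx to Finset sums
  have hfs : ∀ f : ℕ → ℚ, (∑ᶠ k ∈ idx Γ (1 : G), f k) = ∑ k ∈ IF, f k := by
    intro f
    rw [hidx_coe, finsum_mem_coe_finset]
  -- key term computation
  have hi' : 0 < c i := hpos i (by rw [hIF, Set.Finite.mem_toFinset]; exact hi)
  have hterm : ∀ k ∈ IF, structConst Γ 1 i k j * (c k : ℚ)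
      = (1 / (c i : ℚ)) * ∑ v ∈ Sfin 1 i, ((gsphere Γ v k ∩ gsphere Γ 1 j).ncard : ℚ) := by
    intro k hk
    have hck : (c k : ℚ) ≠ 0 := by exact_mod_cast (hpos k hk).ne'
    unfold structConst
    have hrw : (∑ᶠ v ∈ gsphere Γ 1 i,
        ((gsphere Γ v k ∩ gsphere Γ 1 j).ncard : ℚ) / ((gsphere Γ v k).ncard : ℚ))
        = ∑ v ∈ Sfin 1 i,
        ((gsphere Γ v k ∩ gsphere Γ 1 j).ncard : ℚ) / ((gsphere Γ v k).ncard : ℚ) := by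
      rw [hset 1 i, finsum_mem_coe_finset]
    rw [hrw, mul_assoc, Finset.sum_mul]
    have hs : (∑ v ∈ Sfin 1 i, ((gsphere Γ v k ∩ gsphere Γ 1 j).ncard : ℚ)
          / ((gsphere Γ v k).ncard : ℚ) * (c k : ℚ))
        = ∑ v ∈ Sfin 1 i, ((gsphere Γ v k ∩ gsphere Γ 1 j).ncard : ℚ) :=
      Finset.sum_congr rfl fun v _ => by rw [hsize v k, div_mul_cancel₀ _ hck]
    rw [hs]
  have main : (∑ᶠ k ∈ idx Γ (1 : G), structConst Γ 1 i k j * ((gsphere Γ 1 k).ncard : ℚ))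
      = ((gsphere Γ 1 j).ncard : ℚ) := by
    rw [hfs]
    calc ∑ k ∈ IF, structConst Γ 1 i k j * ((gsphere Γ 1 k).ncard : ℚ)
        = ∑ k ∈ IF, (1 / (c i : ℚ)) *
            ∑ v ∈ Sfin 1 i, ((gsphere Γ v k ∩ gsphere Γ 1 j).ncard : ℚ) :=
          Finset.sum_congr rfl (fun k hk => hterm k hk)
      _ = (1 / (c i : ℚ)) * ∑ v ∈ Sfin 1 i,
            ∑ k ∈ IF, ((gsphere Γ v k ∩ gsphere Γ 1 j).ncard : ℚ) := by
          rw [← Finset.mul_sum, Finset.sum_comm]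
      _ = (1 / (c i : ℚ)) * ∑ v ∈ Sfin 1 i, ((gsphere Γ 1 j).ncard : ℚ) := by
          congr 1
          refine Finset.sum_congr rfl (fun v _ => ?_)
          rw [← Nat.cast_sum, hpart v]
      _ = ((gsphere Γ 1 j).ncard : ℚ) := by
          rw [Finset.sum_const, nsmul_eq_mul, ← hcard 1 i]
          have : ((gsphere Γ 1 i).ncard : ℚ) ≠ 0 := by exact_mod_cast hi'.ne'
          field_simp
          rfl
  refine ⟨main, ?_⟩
  rw [hfs] at main ⊢
  calc ∑ k ∈ IF, ((gsphere Γ 1 k).ncard : ℚ) / (Fintype.card G : ℚ)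
          * structConst Γ 1 i k j
      = ∑ k ∈ IF, (structConst Γ 1 i k j * ((gsphere Γ 1 k).ncard : ℚ))
          / (Fintype.card G : ℚ) := by
        refine Finset.sum_congr rfl (fun k _ => ?_); ring
    _ = (∑ k ∈ IF, structConst Γ 1 i k j * ((gsphere Γ 1 k).ncard : ℚ))
          / (Fintype.card G : ℚ) := by rw [Finset.sum_div]
    _ = ((gsphere Γ 1 j).ncard : ℚ) / (Fintype.card G : ℚ) := by rw [main]
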